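/- Let K ⊂ ℝ be a real number field (a finite field extension of ℚ contained in ℝ), let P ⊂ K² and let α ∈ ℝ². If some line through the origin of ℝ² contains two distinct points of α + P, then the K-linear span of {1, α₁, α₂} in ℝ has dimension at most 2. If two distinct lines through the origin each contain two distinct points of α + P, then α ∈ K². -/
import Mathlib

set_option synthInstance.maxHeartbeats 1000000

/-- A point of `ℝ²` lies on a line through the origin, i.e. a one-dimensional
ℝ-linear subspace of `ℝ × ℝ`. -/
def OnLine (ℓ : Submodule ℝ (ℝ × ℝ)) : Prop := Module.finrank ℝ ℓ = 1

lemma cross_eq_zero {ℓ : Submodule ℝ (ℝ × ℝ)} (h : OnLine ℓ) {x y : ℝ × ℝ}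
    (hx : x ∈ ℓ) (hy : y ∈ ℓ) : x.1 * y.2 - x.2 * y.1 = 0 := by
  obtain ⟨v, -, hall⟩ := finrank_eq_one_iff'.mp h
  obtain ⟨c, hc⟩ := hall ⟨x, hx⟩
  obtain ⟨d, hd⟩ := hall ⟨y, hy⟩
  have hx' : x = c • (v : ℝ × ℝ) := by
    rw [← Submodule.coe_smul, hc]
  have hy' : y = d • (v : ℝ × ℝ) := by
    rw [← Submodule.coe_smul, hd]
  rw [hx', hy']
  simp [Prod.smul_def]
  ring

lemma cross_ne_zero {ℓ₁ ℓ₂ : Submodule ℝ (ℝ × ℝ)} (h1 : OnLine ℓ₁) (h2 : OnLine ℓ₂)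
    (hne : ℓ₁ ≠ ℓ₂) {x y : ℝ × ℝ} (hx : x ∈ ℓ₁) (hx0 : x ≠ 0) (hy : y ∈ ℓ₂) (hy0 : y ≠ 0) :
    x.1 * y.2 - x.2 * y.1 ≠ 0 := by
  intro hc
  have hyx : y ∈ Submodule.span ℝ {x} := by
    rcases eq_or_ne x.1 0 with h0 | h0
    · have hx2 : x.2 ≠ 0 := by
        intro h2'
        exact hx0 (Prod.ext h0 h2')
      refine Submodule.mem_span_singleton.mpr ⟨y.2 / x.2, ?_⟩
      have : y.1 = 0 := by
        have : x.2 * y.1 = 0 := by rw [h0] at hc; simpa using hc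
        rcases mul_eq_zero.mp this with h | h
        · exact absurd h hx2
        · exact h
      apply Prod.ext <;> simp [Prod.smul_def] <;> field_simp <;> linarith
    · refine Submodule.mem_span_singleton.mpr ⟨y.1 / x.1, ?_⟩
      apply Prod.ext <;> simp [Prod.smul_def] <;> field_simp <;> linarith
  have hxspan : Submodule.span ℝ {x} ≤ ℓ₁ := Submodule.span_le.mpr (by simpa using hx)
  have hd1 : FiniteDimensional ℝ ℓ₁ := FiniteDimensional.of_finrank_pos (by rw [h1]; norm_num)
  have hd2 : FiniteDimensional ℝ ℓ₂ := FiniteDimensional.of_finrank_pos (by rw [h2]; norm_num)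
  have e1 : Submodule.span ℝ {x} = ℓ₁ :=
    Submodule.eq_of_le_of_finrank_le hxspan (by rw [h1, finrank_span_singleton hx0])
  have hyspan : Submodule.span ℝ {y} ≤ ℓ₂ := Submodule.span_le.mpr (by simpa using hy)
  have e2 : Submodule.span ℝ {y} = ℓ₂ :=
    Submodule.eq_of_le_of_finrank_le hyspan (by rw [h2, finrank_span_singleton hy0])
  have hle : ℓ₂ ≤ ℓ₁ := by
    rw [← e2]
    exact Submodule.span_le.mpr (by simpa using hxspan hyx)
  exact hne (Submodule.eq_of_le_of_finrank_le hle (by rw [h1, h2])).symm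

lemma span_aux (K : Subfield ℝ) (x y : ℝ) (h : x ∈ Submodule.span K ({1, y} : Set ℝ)) :
    Module.finrank K (Submodule.span K ({1, x, y} : Set ℝ)) ≤ 2 := by
  classical
  have heq : Submodule.span K ({1, x, y} : Set ℝ) = Submodule.span K ({1, y} : Set ℝ) := by
    apply le_antisymm
    · rw [Submodule.span_le]
      rintro z hz
      simp only [Set.mem_insert_iff, Set.mem_singleton_iff] at hz
      rcases hz with rfl | rfl | rfl
      · exact Submodule.subset_span (by simp)
      · exact h
      · exact Submodule.subset_span (by simp)
    · exact Submodule.span_mono (by intro z hz; simp only [Set.mem_insert_iff,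
        Set.mem_singleton_iff] at hz ⊢; tauto)
  rw [heq]
  have h1 : (↑({1, y} : Finset ℝ) : Set ℝ) = ({1, y} : Set ℝ) := by simp
  have := finrank_span_finset_le_card (R := K) ({1, y} : Finset ℝ)
  rw [Set.finrank, h1] at this
  exact this.trans (by
    calc ({1, y} : Finset ℝ).card ≤ ({y} : Finset ℝ).card + 1 := Finset.card_insert_le _ _
    _ ≤ 2 := by simp)

theorem stmt3 (K : Subfield ℝ) [FiniteDimensional ℚ K]
    (P : Set (ℝ × ℝ)) (hP : ∀ p ∈ P, p.1 ∈ K ∧ p.2 ∈ K) (α : ℝ × ℝ) :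
    ((∃ p ∈ P, ∃ q ∈ P, p ≠ q ∧ ∃ ℓ : Submodule ℝ (ℝ × ℝ), OnLine ℓ ∧
        α + p ∈ ℓ ∧ α + q ∈ ℓ) →
      Module.finrank K (Submodule.span K ({1, α.1, α.2} : Set ℝ)) ≤ 2) ∧
    ((∃ ℓ₁ ℓ₂ : Submodule ℝ (ℝ × ℝ), ℓ₁ ≠ ℓ₂ ∧ OnLine ℓ₁ ∧ OnLine ℓ₂ ∧
        (∃ p ∈ P, ∃ q ∈ P, p ≠ q ∧ α + p ∈ ℓ₁ ∧ α + q ∈ ℓ₁) ∧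
        (∃ p ∈ P, ∃ q ∈ P, p ≠ q ∧ α + p ∈ ℓ₂ ∧ α + q ∈ ℓ₂)) →
      α.1 ∈ K ∧ α.2 ∈ K) := by
  constructor
  · rintro ⟨p, hp, q, hq, hpq, ℓ, hℓ, hpℓ, hqℓ⟩
    have hcross := cross_eq_zero hℓ hpℓ hqℓ
    simp only [Prod.fst_add, Prod.snd_add] at hcross
    have E1 : (q.2 - p.2) * α.1 + (p.1 - q.1) * α.2 + (p.1 * q.2 - p.2 * q.1) = 0 := by
      linear_combination hcross
    obtain ⟨hp1, hp2⟩ := hP p hp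
    obtain ⟨hq1, hq2⟩ := hP q hq
    have hcmem : p.1 * q.2 - p.2 * q.1 ∈ K :=
      K.sub_mem (K.mul_mem hp1 hq2) (K.mul_mem hp2 hq1)
    rcases eq_or_ne (q.2 - p.2) 0 with ha | ha
    · have hb : p.1 - q.1 ≠ 0 := by
        intro hb
        exact hpq (Prod.ext (by linarith) (by linarith))
      have hmem : α.2 ∈ Submodule.span K ({1, α.1} : Set ℝ) := by
        rw [Submodule.mem_span_pair]
        have m1 : -(p.1 * q.2 - p.2 * q.1) / (p.1 - q.1) ∈ K :=
          K.div_mem (K.neg_mem hcmem) (K.sub_mem hp1 hq1)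
        have m2 : -(q.2 - p.2) / (p.1 - q.1) ∈ K :=
          K.div_mem (K.neg_mem (K.sub_mem hq2 hp2)) (K.sub_mem hp1 hq1)
        refine ⟨⟨_, m1⟩, ⟨_, m2⟩, ?_⟩
        show -(p.1 * q.2 - p.2 * q.1) / (p.1 - q.1) * 1 +
          -(q.2 - p.2) / (p.1 - q.1) * α.1 = α.2
        field_simp
        linear_combination -E1
      have hset : ({1, α.1, α.2} : Set ℝ) = ({1, α.2, α.1} : Set ℝ) := by
        rw [Set.pair_comm α.1 α.2]
      rw [hset]
      exact span_aux K α.2 α.1 hmem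
    · have hmem : α.1 ∈ Submodule.span K ({1, α.2} : Set ℝ) := by
        rw [Submodule.mem_span_pair]
        have m1 : -(p.1 * q.2 - p.2 * q.1) / (q.2 - p.2) ∈ K :=
          K.div_mem (K.neg_mem hcmem) (K.sub_mem hq2 hp2)
        have m2 : -(p.1 - q.1) / (q.2 - p.2) ∈ K :=
          K.div_mem (K.neg_mem (K.sub_mem hp1 hq1)) (K.sub_mem hq2 hp2)
        refine ⟨⟨_, m1⟩, ⟨_, m2⟩, ?_⟩
        show -(p.1 * q.2 - p.2 * q.1) / (q.2 - p.2) * 1 +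
          -(p.1 - q.1) / (q.2 - p.2) * α.2 = α.1
        field_simp
        linear_combination -E1
      exact span_aux K α.1 α.2 hmem
  · rintro ⟨ℓ₁, ℓ₂, hne, h1, h2, ⟨p, hp, q, hq, hpq, hpl, hql⟩,
      ⟨r, hr, s, hs, hrs, hrl, hsl⟩⟩
    have hcross1 := cross_eq_zero h1 hpl hql
    have hcross2 := cross_eq_zero h2 hrl hsl
    simp only [Prod.fst_add, Prod.snd_add] at hcross1 hcross2
    have E1 : (q.2 - p.2) * α.1 + (p.1 - q.1) * α.2 + (p.1 * q.2 - p.2 * q.1) = 0 := by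
      linear_combination hcross1
    have E2 : (s.2 - r.2) * α.1 + (r.1 - s.1) * α.2 + (r.1 * s.2 - r.2 * s.1) = 0 := by
      linear_combination hcross2
    have hxmem : q - p ∈ ℓ₁ := by
      have := ℓ₁.sub_mem hql hpl
      simpa using this
    have hymem : s - r ∈ ℓ₂ := by
      have := ℓ₂.sub_mem hsl hrl
      simpa using this
    have hx0 : q - p ≠ 0 := sub_ne_zero.mpr (Ne.symm hpq)
    have hy0 : s - r ≠ 0 := sub_ne_zero.mpr (Ne.symm hrs)
    have hD := cross_ne_zero h1 h2 hne hxmem hx0 hymem hy0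
    simp only [Prod.fst_sub, Prod.snd_sub] at hD
    have hD0 : (q.2 - p.2) * (r.1 - s.1) - (s.2 - r.2) * (p.1 - q.1) ≠ 0 :=
      fun h => hD (by linear_combination h)
    obtain ⟨hp1, hp2⟩ := hP p hp
    obtain ⟨hq1, hq2⟩ := hP q hq
    obtain ⟨hr1, hr2⟩ := hP r hr
    obtain ⟨hs1, hs2⟩ := hP s hs
    have hDmem : (q.2 - p.2) * (r.1 - s.1) - (s.2 - r.2) * (p.1 - q.1) ∈ K :=
      K.sub_mem (K.mul_mem (K.sub_mem hq2 hp2) (K.sub_mem hr1 hs1))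
        (K.mul_mem (K.sub_mem hs2 hr2) (K.sub_mem hp1 hq1))
    have hc1mem : p.1 * q.2 - p.2 * q.1 ∈ K :=
      K.sub_mem (K.mul_mem hp1 hq2) (K.mul_mem hp2 hq1)
    have hc2mem : r.1 * s.2 - r.2 * s.1 ∈ K :=
      K.sub_mem (K.mul_mem hr1 hs2) (K.mul_mem hr2 hs1)
    constructor
    · have hv : α.1 = ((r.1 * s.2 - r.2 * s.1) * (p.1 - q.1) -
          (p.1 * q.2 - p.2 * q.1) * (r.1 - s.1)) /
          ((q.2 - p.2) * (r.1 - s.1) - (s.2 - r.2) * (p.1 - q.1)) := by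
        rw [eq_div_iff hD0]
        linear_combination (r.1 - s.1) * E1 - (p.1 - q.1) * E2
      rw [hv]
      exact K.div_mem (K.sub_mem (K.mul_mem hc2mem (K.sub_mem hp1 hq1))
        (K.mul_mem hc1mem (K.sub_mem hr1 hs1))) hDmem
    · have hv : α.2 = ((s.2 - r.2) * (p.1 * q.2 - p.2 * q.1) -
          (q.2 - p.2) * (r.1 * s.2 - r.2 * s.1)) /
          ((q.2 - p.2) * (r.1 - s.1) - (s.2 - r.2) * (p.1 - q.1)) := by
        rw [eq_div_iff hD0]
        linear_combination (q.2 - p.2) * E2 - (s.2 - r.2) * E1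
      rw [hv]
      exact K.div_mem (K.sub_mem (K.mul_mem (K.sub_mem hs2 hr2) hc1mem)
        (K.mul_mem (K.sub_mem hq2 hp2) hc2mem)) hDmem
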